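/- Let S be a graph on [s] with a cycle (1,2,…,t,1), t ≥ 3. Let B ⊆ [n/s] have no nontrivial solution to y_1 + ⋯ + y_{t-1} = (t-1)y_t, and let G be the s-partite graph whose edges are exactly the pairs {v_i, v_j} (v_i ∈ V_i, v_j ∈ V_j, {i,j} ∈ E(S)) arising from the canonical copies S_{x,y} (vertex x + (i-1)y in V_i) over x ∈ [n/s], y ∈ B. Then for every canonical copy v_1 ∈ V_1,…,v_s ∈ V_s of S in G there exist x ∈ [n/s] and y ∈ B with v_i = x + (i-1)y for all 1 ≤ i ≤ t. In particular, G has at most (n/s)·|B|·n^{s-t} ≤ n^{s-1} canonical copies of S. -/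

import Mathlib

/-- Let S be a graph on [s] with the cycle (0,1,…,t-1,0), t ≥ 3, and let G be
the s-partite graph whose edges are exactly the pairs {(i, x + i·y), (j, x + j·y)}
with {i,j} ∈ E(S), x ∈ [n/s], y ∈ B, where B has no nontrivial solution to
y_1 + ⋯ + y_{t-1} = (t-1)y_t. Then every canonical copy v of S in G satisfies
v i = x + i·y on the cycle coordinates for some x ∈ [n/s], y ∈ B; in
particular G has at most n^{s-1} canonical copies of S. -/
theorem stmt_16 (t s n : ℕ) (ht : 3 ≤ t) (hts : t ≤ s)
    (S : SimpleGraph ℕ) (hS : ∀ i j, S.Adj i j → i < s ∧ j < s)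
    (hcyc1 : ∀ a : ℕ, a + 1 < t → S.Adj a (a + 1)) (hcyc2 : S.Adj (t - 1) 0)
    (B : Finset ℕ) (hB : B ⊆ Finset.Icc 1 (n / s))
    (hBsol : ∀ y : ℕ → ℕ, (∀ i < t, y i ∈ B) →
      (∑ i ∈ Finset.range (t - 1), y i) = (t - 1) * y (t - 1) →
      ∀ i < t, ∀ j < t, y i = y j)
    (G : SimpleGraph (ℕ × ℕ))
    (hG : ∀ p q : ℕ × ℕ, G.Adj p q ↔ (S.Adj p.1 q.1 ∧
      ∃ x ∈ Finset.Icc 1 (n / s), ∃ y ∈ B,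
        p.2 = x + p.1 * y ∧ q.2 = x + q.1 * y)) :
    (∀ v : Fin s → ℕ, (∀ i, v i ∈ Finset.Icc 1 n) →
      (∀ i j : Fin s, S.Adj i.val j.val → G.Adj (i.val, v i) (j.val, v j)) →
      ∃ x ∈ Finset.Icc 1 (n / s), ∃ y ∈ B, ∀ i : Fin s, i.val < t →
        v i = x + i.val * y) ∧
    Set.ncard {v : Fin s → ℕ | (∀ i, v i ∈ Finset.Icc 1 n) ∧
      ∀ i j : Fin s, S.Adj i.val j.val → G.Adj (i.val, v i) (j.val, v j)}
      ≤ n ^ (s - 1) := by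
  have hs3 : 3 ≤ s := le_trans ht hts
  have part1 : ∀ v : Fin s → ℕ, (∀ i, v i ∈ Finset.Icc 1 n) →
      (∀ i j : Fin s, S.Adj i.val j.val → G.Adj (i.val, v i) (j.val, v j)) →
      ∃ x ∈ Finset.Icc 1 (n / s), ∃ y ∈ B, ∀ i : Fin s, i.val < t →
        v i = x + i.val * y := by
    intro v hv hadj
    set w : ℕ → ℕ := fun a => if h : a < s then v ⟨a, h⟩ else 0 with hwdef
    have hwv : ∀ (i : Fin s), w i.val = v i := by
      intro i; simp [hwdef, i.isLt]
    have key : ∀ a, a + 1 < t → ∃ ya ∈ B, w (a + 1) = w a + ya := by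
      intro a ha
      have ha1 : a + 1 < s := lt_of_lt_of_le ha hts
      have has : a < s := by omega
      have h := hadj ⟨a, has⟩ ⟨a + 1, ha1⟩ (hcyc1 a ha)
      rw [hG] at h
      obtain ⟨-, x, hx, y, hy, hp, hq⟩ := h
      refine ⟨y, hy, ?_⟩
      have h1 : w a = x + a * y := by rw [show w a = v ⟨a, has⟩ from hwv ⟨a, has⟩]; exact hp
      have h2 : w (a + 1) = x + (a + 1) * y := by
        rw [show w (a + 1) = v ⟨a + 1, ha1⟩ from hwv ⟨a + 1, ha1⟩]; exact hq
      rw [h1, h2]; ring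
    have key2 : ∃ x ∈ Finset.Icc 1 (n / s), ∃ yt ∈ B,
        w 0 = x ∧ w (t - 1) = x + (t - 1) * yt := by
      have ht1 : t - 1 < s := by omega
      have h0 : 0 < s := by omega
      have h := hadj ⟨t - 1, ht1⟩ ⟨0, h0⟩ hcyc2
      rw [hG] at h
      obtain ⟨-, x, hx, y, hy, hp, hq⟩ := h
      refine ⟨x, hx, y, hy, ?_, ?_⟩
      · rw [show w 0 = v ⟨0, h0⟩ from hwv ⟨0, h0⟩]; simpa using hq
      · rw [show w (t - 1) = v ⟨t - 1, ht1⟩ from hwv ⟨t - 1, ht1⟩]; exact hp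
    obtain ⟨x, hx, yt, hyt, hw0, hwt⟩ := key2
    choose f hfB hfEq using key
    set Y : ℕ → ℕ := fun a => if h : a + 1 < t then f a h else yt with hYdef
    have hYB : ∀ i < t, Y i ∈ B := by
      intro i hi
      by_cases h : i + 1 < t
      · simp only [hYdef, dif_pos h]; exact hfB i h
      · simp only [hYdef, dif_neg h]; exact hyt
    have tele : ∀ a, a < t → w a = w 0 + ∑ i ∈ Finset.range a, Y i := by
      intro a
      induction a with
      | zero => simp
      | succ a ih =>
        intro ha
        have ha' : a + 1 < t := ha
        rw [Finset.sum_range_succ, hfEq a ha', ih (by omega)]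
        have : Y a = f a ha' := by simp only [hYdef, dif_pos ha']
        rw [this]; ring
    have hYt : Y (t - 1) = yt := by
      have : ¬ (t - 1 + 1 < t) := by omega
      simp only [hYdef, dif_neg this]
    have hsum : (∑ i ∈ Finset.range (t - 1), Y i) = (t - 1) * Y (t - 1) := by
      have h1 := tele (t - 1) (by omega)
      have e1 : w 0 + ∑ i ∈ Finset.range (t - 1), Y i = w 0 + (t - 1) * yt := by
        rw [← h1, hwt, hw0]
      rw [hYt]
      exact Nat.add_left_cancel e1
    have hall := hBsol Y hYB hsum
    have hy0 : Y 0 ∈ B := hYB 0 (by omega)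
    refine ⟨x, hx, Y 0, hy0, ?_⟩
    intro i hi
    have h1 := tele i.val hi
    have hconst : ∀ j ∈ Finset.range i.val, Y j = Y 0 :=
      fun j hj => hall j (lt_trans (Finset.mem_range.mp hj) hi) 0 (by omega)
    rw [Finset.sum_congr rfl hconst, Finset.sum_const, Finset.card_range,
      smul_eq_mul] at h1
    rw [← hwv i, h1, hw0]
  refine ⟨part1, ?_⟩
  set A : Set (Fin s → ℕ) := {v : Fin s → ℕ | (∀ i, v i ∈ Finset.Icc 1 n) ∧
      ∀ i j : Fin s, S.Adj i.val j.val → G.Adj (i.val, v i) (j.val, v j)} with hA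
  have h0s : 0 < s := by omega
  have h1s : 1 < s := by omega
  set i0 : Fin s := ⟨0, h0s⟩ with hi0
  set i1 : Fin s := ⟨1, h1s⟩ with hi1
  set F : (Fin s → ℕ) → (Fin s → ℕ) := fun v i =>
    if i.val = 0 then v i0 else if i.val = 2 then 1 else
      if i.val < t then v i1 - v i0 else v i with hF
  -- key facts about members of A
  have hmem : ∀ v ∈ A, ∃ x ∈ Finset.Icc 1 (n / s), ∃ y ∈ B,
      (∀ i : Fin s, i.val < t → v i = x + i.val * y) ∧ v i0 = x ∧ v i1 - v i0 = y := by
    intro v hv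
    obtain ⟨x, hx, y, hy, hall⟩ := part1 v hv.1 hv.2
    have hv0 : v i0 = x := by
      have := hall i0 (show i0.val < t by simp [hi0]; omega)
      simpa [hi0] using this
    have hv1 : v i1 = x + y := by
      have := hall i1 (show i1.val < t by simp [hi1]; omega)
      simpa [hi1] using this
    exact ⟨x, hx, y, hy, hall, hv0, by rw [hv1, hv0]; omega⟩
  have hinj : Set.InjOn F A := by
    intro v hv v' hv' heq
    obtain ⟨x, hx, y, hy, hall, hv0, hvy⟩ := hmem v hv
    obtain ⟨x', hx', y', hy', hall', hv0', hvy'⟩ := hmem v' hv'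
    have e0 : v i0 = v' i0 := by
      have := congrFun heq i0
      simpa [hF, hi0] using this
    have e1 : y = y' := by
      have := congrFun heq i1
      rw [← hvy, ← hvy']
      simpa [hF, hi1, show (1:ℕ) < t by omega] using this
    funext i
    by_cases hit : i.val < t
    · rw [hall i hit, hall' i hit, e1, ← hv0, ← hv0', e0]
    · have h2 : ¬ i.val = 0 := by omega
      have h3 : ¬ i.val = 2 := by omega
      have := congrFun heq i
      simpa [hF, h2, h3, hit] using this
  set W : Finset (Fin s → ℕ) := Fintype.piFinset fun i : Fin s =>
    if i.val = 2 then ({1} : Finset ℕ) else Finset.Icc 1 n with hW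
  have himg : F '' A ⊆ ↑W := by
    rintro - ⟨v, hv, rfl⟩
    obtain ⟨x, hx, y, hy, hall, hv0, hvy⟩ := hmem v hv
    have hyIcc : y ∈ Finset.Icc 1 n := by
      have := hB hy
      simp only [Finset.mem_Icc] at this ⊢
      exact ⟨this.1, le_trans this.2 (Nat.div_le_self n s)⟩
    simp only [hW, Finset.coe_sort_coe, Finset.mem_coe, Fintype.mem_piFinset]
    intro i
    by_cases h2 : i.val = 2
    · simp [hF, h2]
    · by_cases h0 : i.val = 0
      · simp only [hF, h0, if_pos rfl, if_neg h2]
        simpa [h0] using hv.1 i0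
      · by_cases hit : i.val < t
        · simp only [hF, if_neg h0, if_neg h2, if_pos hit]
          rw [hvy]; simpa [h2] using hyIcc
        · simp only [hF, if_neg h0, if_neg h2, if_neg hit]
          simpa [h2] using hv.1 i
  have hWcard : W.card = n ^ (s - 1) := by
    rw [hW, Fintype.card_piFinset]
    have i2 : Fin s := ⟨2, by omega⟩
    have hmem2 : (⟨2, by omega⟩ : Fin s) ∈ Finset.univ := Finset.mem_univ _
    rw [← Finset.mul_prod_erase Finset.univ _ hmem2]
    have hone : (if ((⟨2, by omega⟩ : Fin s)).val = 2 then ({1} : Finset ℕ)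
        else Finset.Icc 1 n).card = 1 := by simp
    rw [hone, one_mul]
    have : ∀ j ∈ Finset.univ.erase (⟨2, by omega⟩ : Fin s),
        (if j.val = 2 then ({1} : Finset ℕ) else Finset.Icc 1 n).card = n := by
      intro j hj
      have hj2 : j.val ≠ 2 := by
        intro h
        exact (Finset.mem_erase.mp hj).1 (Fin.ext h)
      simp [hj2]
    rw [Finset.prod_congr rfl this, Finset.prod_const,
      Finset.card_erase_of_mem hmem2, Finset.card_univ, Fintype.card_fin]
  calc A.ncard = (F '' A).ncard := (Set.ncard_image_of_injOn hinj).symm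
    _ ≤ (↑W : Set (Fin s → ℕ)).ncard := Set.ncard_le_ncard himg (Finset.finite_toSet W)
    _ = W.card := Set.ncard_coe_finset W
    _ = n ^ (s - 1) := hWcard
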